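/- arXiv:2301.06973 — 4 statements merged into one kernel-verified Lean document; each statement's English description precedes it below -/
import Mathlib

section
/- Suppose the base measure μ has finite support {z_1,…,z_r} with μ({z_i}) = p_i > 0 and ∑ p_i = 1. Then almost surely the empirical measure ν_n of the critical points of P_n converges weakly to μ as n → ∞. -/
open MeasureTheory ProbabilityTheory Filter Polynomial
open scoped ENNReal

noncomputable example : DecidableEq ℂ := inferInstance

lemma map_fsum {ι : Type*} (t : Finset ι) (f : ι → Multiset ℂ) (φ : ℂ → ℝ) :
    ((∑ i ∈ t, f i).map φ).sum = ∑ i ∈ t, ((f i).map φ).sum := by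
  classical
  induction t using Finset.induction_on with
  | empty => simp
  | insert a t h ih => rw [Finset.sum_insert h, Finset.sum_insert h, Multiset.map_add,
      Multiset.sum_add, ih]

lemma card_fsum {ι : Type*} (t : Finset ι) (f : ι → Multiset ℂ) :
    Multiset.card (∑ i ∈ t, f i) = ∑ i ∈ t, Multiset.card (f i) := by
  classical
  induction t using Finset.induction_on with
  | empty => simp
  | insert a t h ih => rw [Finset.sum_insert h, Finset.sum_insert h,
      Multiset.card_add, ih]

lemma abs_msum_le (m : Multiset ℝ) (c : ℝ) (h : ∀ x ∈ m, |x| ≤ c) :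
    |m.sum| ≤ (Multiset.card m : ℝ) * c := by
  induction m using Multiset.induction_on with
  | empty => simp
  | cons a m ih =>
    rw [Multiset.sum_cons]
    have h1 := h a (Multiset.mem_cons_self a m)
    have h2 := ih fun x hx => h x (Multiset.mem_cons_of_mem hx)
    calc |a + m.sum| ≤ |a| + |m.sum| := abs_add_le _ _
      _ ≤ c + (Multiset.card m : ℝ) * c := add_le_add h1 h2
      _ = (Multiset.card (a ::ₘ m) : ℝ) * c := by rw [Multiset.card_cons]; push_cast; ring

lemma tendsto_nat_div_sub_one :
    Tendsto (fun n : ℕ => (n : ℝ) / ((n : ℝ) - 1)) atTop (nhds 1) := by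
  have h : Tendsto (fun n : ℕ => (n : ℝ) - 1) atTop atTop :=
    tendsto_atTop_add_const_right _ (-1) tendsto_natCast_atTop_atTop
  have h0 : Tendsto (fun n : ℕ => ((n : ℝ) - 1)⁻¹) atTop (nhds 0) := h.inv_tendsto_atTop
  have := h0.const_add 1
  rw [add_zero] at this
  refine this.congr' ?_
  filter_upwards [eventually_ge_atTop 2] with n hn
  have hne : (n : ℝ) - 1 ≠ 0 := by
    have : (2 : ℝ) ≤ n := by exact_mod_cast hn
    nlinarith
  field_simp
  ring

lemma tendsto_div_nsub1 (a : ℕ → ℕ) (q : ℝ)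
    (h : Tendsto (fun n => (a n : ℝ) / n) atTop (nhds q)) :
    Tendsto (fun n => (a n : ℝ) / ((n : ℝ) - 1)) atTop (nhds q) := by
  have := h.mul tendsto_nat_div_sub_one
  rw [mul_one] at this
  refine this.congr' ?_
  filter_upwards [eventually_ge_atTop 2] with n hn
  have hn0 : (n : ℝ) ≠ 0 := by
    have h0 : 0 < n := by omega
    exact_mod_cast h0.ne'
  field_simp

lemma myProdEq (ZZ : ℕ → ℂ) (n : ℕ) :
    ∏ k ∈ Finset.range n, (X - C (ZZ k))
      = (((Finset.range n).val.map ZZ).map fun a => X - C a).prod := by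
  rw [Finset.prod_eq_multiset_prod, Multiset.map_map]
  rfl

lemma roots_prod (ZZ : ℕ → ℂ) (n : ℕ) :
    (∏ k ∈ Finset.range n, (X - C (ZZ k))).roots = (Finset.range n).val.map ZZ := by
  rw [myProdEq]; exact roots_multiset_prod_X_sub_C _

lemma natDeg_prod (ZZ : ℕ → ℂ) (n : ℕ) :
    (∏ k ∈ Finset.range n, (X - C (ZZ k))).natDegree = n := by
  rw [myProdEq, natDegree_multiset_prod_X_sub_C_eq_card]
  simp

lemma deriv_deg (ZZ : ℕ → ℂ) (n : ℕ) (hn : 1 ≤ n) :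
    (derivative (∏ k ∈ Finset.range n, (X - C (ZZ k)))).degree = ((n - 1 : ℕ) : WithBot ℕ) := by
  rw [degree_derivative_eq (∏ k ∈ Finset.range n, (X - C (ZZ k)))
    (by rw [natDeg_prod]; exact hn), natDeg_prod]

lemma deriv_ne_zero (ZZ : ℕ → ℂ) (n : ℕ) (hn : 1 ≤ n) :
    derivative (∏ k ∈ Finset.range n, (X - C (ZZ k))) ≠ 0 := by
  intro h
  have := deriv_deg ZZ n hn
  rw [h, degree_zero] at this
  exact (by simp at this)

lemma deriv_roots_card (ZZ : ℕ → ℂ) (n : ℕ) (hn : 1 ≤ n) :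
    Multiset.card (derivative (∏ k ∈ Finset.range n, (X - C (ZZ k)))).roots = n - 1 := by
  have h := (splits_iff_card_roots
    (f := derivative (∏ k ∈ Finset.range n, (X - C (ZZ k))))).mp (IsAlgClosed.splits _)
  rw [h, natDegree_eq_of_degree_eq_some (deriv_deg ZZ n hn)]

lemma deriv_count_ge (ZZ : ℕ → ℂ) (n : ℕ) (hn : 1 ≤ n) (z : ℂ) :
    ((Finset.range n).filter (fun k => ZZ k = z)).card - 1
      ≤ (derivative (∏ k ∈ Finset.range n, (X - C (ZZ k)))).roots.count z := by
  classical
  rw [count_roots]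
  have h := rootMultiplicity_sub_one_le_derivative_rootMultiplicity
    (∏ k ∈ Finset.range n, (X - C (ZZ k))) z
  refine le_trans ?_ h
  have : rootMultiplicity z (∏ k ∈ Finset.range n, (X - C (ZZ k)))
      = ((Finset.range n).val.map ZZ).count z := by
    rw [← count_roots, roots_prod]
  rw [this]
  rw [Multiset.count_map]
  have : ((Finset.range n).filter (fun k => ZZ k = z)).card
      = Multiset.card (((Finset.range n).val).filter fun k => ZZ k = z) := rfl
  rw [this]
  have h2 : Multiset.filter (fun k => ZZ k = z) (Finset.range n).val
      = Multiset.filter (fun a => z = ZZ a) (Finset.range n).val :=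
    Multiset.filter_congr (fun a _ => eq_comm)
  rw [h2]

noncomputable def empCritMeasure (ZZ : ℕ → ℂ) (n : ℕ) : Measure ℂ :=
  ((n : ℝ≥0∞) - 1)⁻¹ •
    ((Polynomial.derivative (∏ k ∈ Finset.range n, (X - Polynomial.C (ZZ k)))).roots.map
      Measure.dirac).sum

lemma finiteMeasure_multiset_dirac (m : Multiset ℂ) :
    IsFiniteMeasure ((m.map Measure.dirac).sum) := by
  induction m using Multiset.induction_on with
  | empty => simp; infer_instance
  | cons a m ih =>
    rw [Multiset.map_cons, Multiset.sum_cons]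
    have := ih
    infer_instance

lemma integral_multiset_dirac (φ : BoundedContinuousFunction ℂ ℝ) (m : Multiset ℂ) :
    ∫ z, φ z ∂((m.map Measure.dirac).sum) = (m.map φ).sum := by
  induction m using Multiset.induction_on with
  | empty => simp
  | cons a m ih =>
    rw [Multiset.map_cons, Multiset.sum_cons, Multiset.map_cons, Multiset.sum_cons]
    have h1 : IsFiniteMeasure ((m.map Measure.dirac).sum) := finiteMeasure_multiset_dirac m
    rw [integral_add_measure (φ.integrable _) (φ.integrable _), ih, integral_dirac]

lemma det_tendsto (s : Finset ℂ) (p : ℂ → ℝ) (hp : ∀ z ∈ s, 0 < p z)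
    (hsum : ∑ z ∈ s, p z = 1) (ZZ : ℕ → ℂ)
    (hfreq : ∀ z ∈ s, Tendsto
      (fun n => ((((Finset.range n).filter (fun k => ZZ k = z)).card : ℝ)) / n)
      atTop (nhds (p z)))
    (φ : BoundedContinuousFunction ℂ ℝ) :
    Tendsto (fun n => ∫ z, φ z ∂(empCritMeasure ZZ n)) atTop
      (nhds (∑ z ∈ s, p z * φ z)) := by
  classical
  set m : ℂ → ℕ → ℕ := fun z n => ((Finset.range n).filter (fun k => ZZ k = z)).card with hm
  set R : ℕ → Multiset ℂ :=
    fun n => (derivative (∏ k ∈ Finset.range n, (X - C (ZZ k)))).roots with hR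
  set B : ℕ → Multiset ℂ := fun n => ∑ z ∈ s, Multiset.replicate (m z n - 1) z with hB
  -- eventually every point of s has appeared
  have hev1 : ∀ z ∈ s, ∀ᶠ n in atTop, 1 ≤ m z n := by
    intro z hz
    have hpos := hp z hz
    have h := (hfreq z hz).eventually (eventually_gt_nhds hpos)
    filter_upwards [h] with n hn
    by_contra hc
    have : m z n = 0 := by omega
    rw [hm] at this
    simp only [this, Nat.cast_zero, zero_div] at hn
    exact lt_irrefl _ hn
  have hev : ∀ᶠ n in atTop, ∀ z ∈ s, 1 ≤ m z n :=
    (Filter.eventually_all_finset s).mpr hev1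
  -- B n ≤ R n
  have hcountB : ∀ n a, (B n).count a = if a ∈ s then m a n - 1 else 0 := by
    intro n a
    rw [hB]
    simp only [Multiset.count_sum', Multiset.count_replicate]
    rw [Finset.sum_ite_eq' s a (fun z => m z n - 1)]
  have hBR : ∀ n, 1 ≤ n → B n ≤ R n := by
    intro n hn
    rw [Multiset.le_iff_count]
    intro a
    rw [hcountB]
    split_ifs with ha
    · exact deriv_count_ge ZZ n hn a
    · exact Nat.zero_le _
  have hcardB : ∀ n, Multiset.card (B n) = ∑ z ∈ s, (m z n - 1) := by
    intro n
    rw [hB, card_fsum]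
    simp [Multiset.card_replicate]
  have hcardR : ∀ n, 1 ≤ n → Multiset.card (R n) = n - 1 := fun n hn => deriv_roots_card ZZ n hn
  -- the integral identity
  have hInt : ∀ n, 2 ≤ n → ∫ z, φ z ∂(empCritMeasure ZZ n)
      = (∑ z ∈ s, ((m z n - 1 : ℕ) : ℝ) / ((n : ℝ) - 1) * φ z)
        + (((R n - B n).map φ).sum) / ((n : ℝ) - 1) := by
    intro n hn
    have h1 : (1:ℕ) ≤ n := by omega
    rw [empCritMeasure, integral_smul_measure, integral_multiset_dirac]
    have hc : (((n : ℝ≥0∞) - 1)⁻¹).toReal = ((n : ℝ) - 1)⁻¹ := by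
      rw [ENNReal.toReal_inv]
      congr 1
      rw [ENNReal.toReal_sub_of_le (by exact_mod_cast h1) (by simp)]
      simp
    have hdec : R n = B n + (R n - B n) := by
      rw [add_comm]
      exact (tsub_add_cancel_of_le (hBR n h1)).symm
    have hsplit : ((R n).map φ).sum
        = ((B n).map φ).sum + ((R n - B n).map φ).sum := by
      conv_lhs => rw [hdec]
      rw [Multiset.map_add, Multiset.sum_add]
    have hBsum : ((B n).map φ).sum = ∑ z ∈ s, ((m z n - 1 : ℕ) : ℝ) * φ z := by
      rw [hB, map_fsum]
      congr 1
      ext z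
      rw [Multiset.map_replicate, Multiset.sum_replicate, nsmul_eq_mul]
    rw [hc, hsplit, hBsum, smul_eq_mul, mul_add, Finset.mul_sum]
    congr 1
    · congr 1; ext z; ring
    · rw [div_eq_inv_mul]
  -- limit of the main term
  have hlim1 : ∀ z ∈ s,
      Tendsto (fun n => ((m z n - 1 : ℕ) : ℝ) / ((n : ℝ) - 1)) atTop (nhds (p z)) := by
    intro z hz
    apply tendsto_div_nsub1
    have h0 : Tendsto (fun n : ℕ => (m z n : ℝ) / n - 1 / n) atTop (nhds (p z)) := by
      have := (hfreq z hz).sub tendsto_one_div_atTop_nhds_zero_nat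
      simpa using this
    refine h0.congr' ?_
    filter_upwards [hev1 z hz, eventually_ge_atTop 1] with n h hn1
    have hc : ((m z n - 1 : ℕ) : ℝ) = (m z n : ℝ) - 1 := by
      push_cast [Nat.cast_sub h]
      ring
    have hn0 : (n : ℝ) ≠ 0 := by
      have h0 : 0 < n := by omega
      exact_mod_cast h0.ne'
    rw [hc]
    field_simp
  have hlimsum : Tendsto (fun n => ∑ z ∈ s, ((m z n - 1 : ℕ) : ℝ) / ((n : ℝ) - 1) * φ z)
      atTop (nhds (∑ z ∈ s, p z * φ z)) := by
    apply tendsto_finset_sum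
    intro z hz
    exact (hlim1 z hz).mul_const (φ z)
  -- limit of the remainder count
  have hcard0 : Tendsto (fun n => (Multiset.card (R n - B n) : ℝ) / ((n : ℝ) - 1))
      atTop (nhds 0) := by
    have hrhs : Tendsto (fun n => 1 - ∑ z ∈ s, ((m z n - 1 : ℕ) : ℝ) / ((n : ℝ) - 1))
        atTop (nhds 0) := by
      have := (tendsto_const_nhds (x := (1:ℝ)) (f := atTop (α := ℕ))).sub
        (tendsto_finset_sum s (fun z hz => hlim1 z hz))
      rwa [hsum, sub_self] at this
    refine hrhs.congr' ?_
    filter_upwards [eventually_ge_atTop 2] with n hn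
    have h1 : (1:ℕ) ≤ n := by omega
    have hle : Multiset.card (B n) ≤ Multiset.card (R n) := Multiset.card_le_card (hBR n h1)
    have hcs : Multiset.card (R n - B n) = (n - 1) - ∑ z ∈ s, (m z n - 1) := by
      rw [Multiset.card_sub (hBR n h1), hcardR n h1, hcardB]
    have hsum_le : ∑ z ∈ s, (m z n - 1) ≤ n - 1 := by
      rw [← hcardB, ← hcardR n h1]; exact hle
    have hn1 : (n : ℝ) - 1 ≠ 0 := by
      have : (2:ℝ) ≤ (n:ℝ) := by exact_mod_cast hn
      nlinarith
    rw [hcs, Nat.cast_sub hsum_le, Nat.cast_sub h1, Nat.cast_one, Nat.cast_sum,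
      sub_div, div_self hn1, Finset.sum_div]
  -- squeeze for the remainder term
  have herr : Tendsto (fun n => (((R n - B n).map φ).sum) / ((n : ℝ) - 1)) atTop (nhds 0) := by
    apply squeeze_zero_norm' (a := fun n => (Multiset.card (R n - B n) : ℝ) / ((n : ℝ) - 1) * ‖φ‖)
    · filter_upwards [eventually_ge_atTop 2] with n hn
      have hpos : (0:ℝ) < (n : ℝ) - 1 := by
        have : (2:ℝ) ≤ (n:ℝ) := by exact_mod_cast hn
        linarith
      rw [Real.norm_eq_abs, abs_div, abs_of_pos hpos, div_mul_eq_mul_div]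
      have habs : |((R n - B n).map φ).sum|
          ≤ (Multiset.card ((R n - B n).map φ) : ℝ) * ‖φ‖ := by
        apply abs_msum_le
        intro x hx
        obtain ⟨w, _, rfl⟩ := Multiset.mem_map.mp hx
        exact (abs_le.mpr ⟨neg_le_of_abs_le (φ.norm_coe_le_norm w), le_of_abs_le
          (φ.norm_coe_le_norm w)⟩).trans_eq rfl |>.trans (le_refl _)
      rw [Multiset.card_map] at habs
      exact div_le_div_of_nonneg_right habs hpos.le
    · simpa using hcard0.mul_const ‖φ‖
  have := hlimsum.add herr
  rw [add_zero] at this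
  refine this.congr' ?_
  filter_upwards [eventually_ge_atTop 2] with n hn
  exact (hInt n hn).symm

/-- If the base measure `μ` has finite support `{z_1, …, z_r}`, with `μ({z_i}) = p_i > 0` and
`∑ p_i = 1`, then almost surely the empirical measure of the critical points of
`P_n(X) = ∏_{k=1}^n (X - Z_k)`, whose roots are i.i.d. with law `μ`,
converges weakly to `μ`. -/
theorem as_convergence_of_critical_points_finite_support
    {Ω : Type*} [MeasurableSpace Ω] (Pr : Measure Ω) [IsProbabilityMeasure Pr]
    (Z : ℕ → Ω → ℂ) (hmeas : ∀ k, Measurable (Z k))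
    (hindep : iIndepFun Z Pr)
    (μ : Measure ℂ) [IsProbabilityMeasure μ]
    (hid : ∀ k, Measure.map (Z k) Pr = μ)
    (s : Finset ℂ) (hs_pos : ∀ z ∈ s, 0 < μ {z}) (hs_full : μ (s : Set ℂ) = 1) :
    ∀ᵐ ω ∂Pr, ∀ φ : BoundedContinuousFunction ℂ ℝ,
      Tendsto (fun n => ∫ z, φ z ∂(empCritMeasure (fun k => Z k ω) n)) atTop
        (nhds (∫ z, φ z ∂μ)) := by
  set p : ℂ → ℝ := fun z => (μ {z}).toReal with hpdef
  have hμfin : ∀ z : ℂ, μ {z} ≠ ⊤ := fun z => measure_ne_top μ _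
  have hp : ∀ z ∈ s, 0 < p z := fun z hz => ENNReal.toReal_pos (hs_pos z hz).ne' (hμfin z)
  have hμs : μ (↑s : Set ℂ) = ∑ z ∈ s, μ {z} := by
    have h : (↑s : Set ℂ) = ⋃ z ∈ s, {z} := by ext x; simp
    rw [h, measure_biUnion_finset ?_ (fun b _ => measurableSet_singleton b)]
    intro x hx y hy hxy
    simp [Function.onFun, Set.disjoint_singleton, hxy]
  have hsum : ∑ z ∈ s, p z = 1 := by
    rw [hpdef]
    rw [← ENNReal.toReal_sum (fun z _ => hμfin z), ← hμs, hs_full, ENNReal.toReal_one]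
  have hcompl : μ ((↑s : Set ℂ)ᶜ) = 0 := by
    have h := measure_compl (s.measurableSet) (measure_ne_top μ _)
    rw [hs_full, measure_univ] at h
    simpa using h
  -- integral of φ against μ
  have hμint : ∀ φ : BoundedContinuousFunction ℂ ℝ, ∫ z, φ z ∂μ = ∑ z ∈ s, p z * φ z := by
    intro φ
    have hres : μ.restrict (↑s : Set ℂ) = μ :=
      Measure.restrict_eq_self_of_ae_mem (by
        rw [ae_iff]
        exact hcompl)
    calc ∫ z, φ z ∂μ = ∫ z in (↑s : Set ℂ), φ z ∂μ := by rw [hres]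
      _ = ∑ z ∈ s, (μ {z}).toReal • φ z :=
          integral_finset s ((φ.integrable μ).integrableOn)
      _ = ∑ z ∈ s, p z * φ z := by simp [hpdef, smul_eq_mul]
  -- almost sure frequency convergence for each z ∈ s
  have hfreqae : ∀ z ∈ s, ∀ᵐ ω ∂Pr,
      Tendsto (fun n => ((((Finset.range n).filter (fun k => Z k ω = z)).card : ℝ)) / n)
        atTop (nhds (p z)) := by
    intro z hz
    set f : ℂ → ℝ := Set.indicator {z} (fun _ => 1) with hf_def
    have hf : Measurable f := measurable_const.indicator (measurableSet_singleton z)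
    set Y : ℕ → Ω → ℝ := fun k ω => f (Z k ω) with hY
    have hmeasY : ∀ k, Measurable (Y k) := fun k => hf.comp (hmeas k)
    have hint : Integrable (Y 0) Pr := by
      refine Integrable.mono' (integrable_const 1) (hmeasY 0).aestronglyMeasurable ?_
      refine ae_of_all _ fun ω => ?_
      rw [hY]
      simp only [hf_def, Set.indicator_apply]
      split_ifs <;> simp
    have hpair : Pairwise (Function.onFun (fun x y => IndepFun x y Pr) Y) := by
      intro i j hij
      exact (hindep.indepFun hij).comp hf hf
    have hident : ∀ i, IdentDistrib (Y i) (Y 0) Pr Pr := by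
      intro i
      have hzz : IdentDistrib (Z i) (Z 0) Pr Pr :=
        ⟨(hmeas i).aemeasurable, (hmeas 0).aemeasurable, by rw [hid i, hid 0]⟩
      exact hzz.comp hf
    have hsl := strong_law_ae_real Y hint hpair hident
    have hE : (∫ ω, Y 0 ω ∂Pr) = p z := by
      rw [hY]
      show (∫ ω, f (Z 0 ω) ∂Pr) = p z
      rw [← integral_map (hmeas 0).aemeasurable hf.aestronglyMeasurable, hid 0, hf_def]
      exact integral_indicator_one (measurableSet_singleton z)
    rw [hE] at hsl
    filter_upwards [hsl] with ω hω
    have hcard : ∀ n, ∑ i ∈ Finset.range n, Y i ω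
        = (((Finset.range n).filter (fun k => Z k ω = z)).card : ℝ) := by
      intro n
      rw [Finset.card_filter]
      push_cast
      refine Finset.sum_congr rfl fun i _ => ?_
      rw [hY]
      simp only [hf_def, Set.indicator_apply, Set.mem_singleton_iff]
    refine hω.congr fun n => ?_
    rw [hcard]
  -- almost surely all samples lie in s
  have hmem : ∀ᵐ ω ∂Pr, ∀ k, Z k ω ∈ s := by
    rw [ae_all_iff]
    intro k
    have h0 : Pr (Z k ⁻¹' ((↑s : Set ℂ)ᶜ)) = 0 := by
      rw [← Measure.map_apply (hmeas k) (s.measurableSet.compl), hid k]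
      exact hcompl
    rw [ae_iff]
    exact h0
  have hfreq_all : ∀ᵐ ω ∂Pr, ∀ z ∈ s,
      Tendsto (fun n => ((((Finset.range n).filter (fun k => Z k ω = z)).card : ℝ)) / n)
        atTop (nhds (p z)) := (ae_ball_iff s.countable_toSet).mpr hfreqae
  filter_upwards [hmem, hfreq_all] with ω hωmem hωfreq
  intro φ
  rw [hμint φ]
  exact det_tendsto s p hp hsum (fun k => Z k ω) hωfreq φ
end

section
/- Let X be a non-degenerate random vector in ℝ^d (no integrability assumed). Then there exist constants δ > 0 and κ > 0 such that for all t ∈ ℝ^d with ‖t‖ ≤ δ, one has |E[e^{i t·X}]| ≤ 1 − κ‖t‖² ≤ e^{−(κ/2)‖t‖²}. -/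
open MeasureTheory Filter Topology
open scoped ENNReal

private lemma cos_aux' {x : ℝ} (hx : |x| ≤ 1) : x ^ 2 / 4 ≤ 1 - Real.cos x := by
  have h := Real.cos_bound hx
  rw [abs_le] at h
  have h2 : x ^ 2 ≤ 1 := by nlinarith [abs_nonneg x, sq_abs x]
  have h3 : |x| ^ 4 = x ^ 4 := by rw [pow_abs, abs_of_nonneg (by positivity)]
  nlinarith [sq_nonneg (x ^ 2)]

set_option maxHeartbeats 1000000 in
/-- **Characteristic function bound for non-degenerate random vectors.**
If `X` is a non-degenerate random vector in `ℝ^d` (no integrability assumed), then there exist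
`δ > 0` and `κ > 0` such that for all `t` with `‖t‖ ≤ δ`,
`|E[e^{i t·X}]| ≤ 1 − κ‖t‖² ≤ e^{−(κ/2)‖t‖²}`. -/
theorem charFun_bound_nondegenerate
    {Ω : Type*} [MeasurableSpace Ω] (Pr : Measure Ω) [IsProbabilityMeasure Pr]
    (d : ℕ) (X : Ω → EuclideanSpace ℝ (Fin d)) (hX : Measurable X)
    (hnondeg : ∀ (c : Fin d → ℝ) (b : ℝ),
      (∀ᵐ ω ∂Pr, ∑ i, c i * X ω i = b) → c = 0) :
    ∃ δ : ℝ, 0 < δ ∧ ∃ κ : ℝ, 0 < κ ∧ ∀ t : EuclideanSpace ℝ (Fin d), ‖t‖ ≤ δ →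
      ‖∫ ω, Complex.exp (Complex.I * ((∑ i, t i * X ω i : ℝ) : ℂ)) ∂Pr‖
          ≤ 1 - κ * ‖t‖ ^ 2 ∧
        1 - κ * ‖t‖ ^ 2 ≤ Real.exp (-(κ / 2) * ‖t‖ ^ 2) := by
  classical
  have hsecond : ∀ κ r : ℝ, 0 ≤ κ → 0 ≤ r → 1 - κ * r ≤ Real.exp (-(κ / 2) * r) := by
    intro κ r hκ hr
    have := Real.add_one_le_exp (-(κ / 2) * r)
    nlinarith
  rcases Nat.eq_zero_or_pos d with hd | hd
  · -- degenerate dimension 0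
    subst hd
    refine ⟨1, one_pos, 1, one_pos, fun t ht => ?_⟩
    have ht0 : t = (0 : EuclideanSpace ℝ (Fin 0)) := Subsingleton.elim _ _
    subst ht0
    have hnt : ‖(0 : EuclideanSpace ℝ (Fin 0))‖ = 0 := norm_zero
    constructor
    · simp only [hnt]
      have : ∀ ω : Ω, Complex.exp (Complex.I * ((∑ i, (0 : EuclideanSpace ℝ (Fin 0)) i * X ω i : ℝ) : ℂ)) = 1 := by
        intro ω; simp
      rw [integral_congr_ae (Eventually.of_forall this)]
      simp
    · rw [hnt]; simpa using hsecond 1 0 zero_le_one le_rfl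
  -- main case : d ≥ 1
  haveI : Nonempty (Fin d) := ⟨⟨0, hd⟩⟩
  haveI : Nontrivial (EuclideanSpace ℝ (Fin d)) := by
    refine nontrivial_of_ne (EuclideanSpace.single ⟨0, hd⟩ (1 : ℝ)) 0 fun h => ?_
    have h2 : EuclideanSpace.single (⟨0, hd⟩ : Fin d) (1 : ℝ) ⟨0, hd⟩
        = (0 : EuclideanSpace ℝ (Fin d)) ⟨0, hd⟩ := by rw [h]
    rw [EuclideanSpace.single_apply] at h2
    simp at h2
  set μ := Pr.prod Pr with hμdef
  haveI : IsProbabilityMeasure μ := by rw [hμdef]; infer_instance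
  set S : EuclideanSpace ℝ (Fin d) → Ω → ℝ := fun c ω => ∑ i, c i * X ω i with hSdef
  have hSmeas : ∀ c, Measurable (S c) := fun c =>
    Finset.measurable_sum _ fun i _ => measurable_const.mul ((measurable_pi_apply i).comp ((PiLp.continuous_ofLp 2 fun _ : Fin d => ℝ).measurable.comp hX))
  set g : EuclideanSpace ℝ (Fin d) → Ω × Ω → ℝ := fun c p => S c p.1 - S c p.2 with hgdef
  have hgmeas : ∀ c, Measurable (g c) := fun c =>
    ((hSmeas c).comp measurable_fst).sub ((hSmeas c).comp measurable_snd)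
  set f : EuclideanSpace ℝ (Fin d) → Ω × Ω → ℝ := fun c p => min ((g c p) ^ 2) 1 with hfdef
  have hfmeas : ∀ c, Measurable (f c) := fun c =>
    ((hgmeas c).pow_const 2).min measurable_const
  have hf0 : ∀ c p, 0 ≤ f c p := fun c p => le_min (sq_nonneg _) zero_le_one
  have hf1 : ∀ c p, f c p ≤ 1 := fun c p => min_le_right _ _
  have hfint : ∀ c, Integrable (f c) μ := by
    intro c
    refine (integrable_const (1 : ℝ)).mono' (hfmeas c).aestronglyMeasurable ?_
    exact Eventually.of_forall fun p => by
      rw [Real.norm_eq_abs, abs_of_nonneg (hf0 c p)]; exact hf1 c p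
  set q : EuclideanSpace ℝ (Fin d) → ℝ := fun c => ∫ p, f c p ∂μ with hqdef
  have hqcont : Continuous q := by
    refine continuous_of_dominated (bound := fun _ => (1 : ℝ))
      (fun c => (hfmeas c).aestronglyMeasurable) ?_ (integrable_const 1) ?_
    · exact fun c => Eventually.of_forall fun p => by
        rw [Real.norm_eq_abs, abs_of_nonneg (hf0 c p)]; exact hf1 c p
    · refine Eventually.of_forall fun p => ?_
      have h1 : Continuous fun c : EuclideanSpace ℝ (Fin d) => g c p := by
        apply Continuous.sub <;>
        exact continuous_finset_sum _ fun i _ =>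
          ((continuous_apply i).comp (PiLp.continuous_ofLp 2 fun _ : Fin d => ℝ)).mul
            continuous_const
      exact (h1.pow 2).min continuous_const
  have hqpos : ∀ c ∈ Metric.sphere (0 : EuclideanSpace ℝ (Fin d)) 1, 0 < q c := by
    intro c hc
    rcases lt_or_ge 0 (q c) with h | h
    · exact h
    exfalso
    have h0 : q c = 0 := le_antisymm h (integral_nonneg fun p => hf0 c p)
    have hae : f c =ᵐ[μ] 0 :=
      (integral_eq_zero_iff_of_nonneg (fun p => hf0 c p) (hfint c)).1 h0
    have hae2 : ∀ᵐ p ∂μ, S c p.1 = S c p.2 := by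
      filter_upwards [hae] with p hp
      have hp' : min ((g c p) ^ 2) 1 = 0 := hp
      rcases le_or_gt 1 ((g c p) ^ 2) with h1 | h1
      · rw [min_eq_right h1] at hp'; norm_num at hp'
      · rw [min_eq_left h1.le] at hp'
        have : g c p = 0 := by nlinarith
        have := sub_eq_zero.1 this
        exact this
    have hae3 := Measure.ae_ae_of_ae_prod hae2
    obtain ⟨ω1, hω1⟩ := hae3.exists
    have hb : ∀ᵐ ω ∂Pr, ∑ i, c i * X ω i = S c ω1 := by
      filter_upwards [hω1] with ω2 h2 using h2.symm
    have hc0 : (fun i => c i) = 0 := hnondeg (fun i => c i) (S c ω1) hb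
    have : c = 0 := by ext i; exact congrFun hc0 i
    rw [this] at hc
    simp at hc
  obtain ⟨c₀, hc₀mem, hc₀min⟩ :=
    (isCompact_sphere (0 : EuclideanSpace ℝ (Fin d)) 1).exists_isMinOn
      (NormedSpace.sphere_nonempty.2 zero_le_one) hqcont.continuousOn
  set lam := q c₀ with hlamdef
  have hlampos : 0 < lam := hqpos c₀ hc₀mem
  have hlam1 : lam ≤ 1 := by
    have : q c₀ ≤ ∫ _p, (1 : ℝ) ∂μ :=
      integral_mono (hfint c₀) (integrable_const 1) fun p => hf1 c₀ p
    simpa using this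
  -- choose truncation level M
  have hMex : ∃ M : ℕ, 1 ≤ M ∧ (Pr {ω | (M : ℝ) < ‖X ω‖}).toReal ≤ lam / 4 := by
    set A : ℕ → Set Ω := fun n => {ω | (n : ℝ) < ‖X ω‖} with hAdef
    have hAm : ∀ n, MeasurableSet (A n) := fun n =>
      measurableSet_lt measurable_const (hX.norm)
    have hanti : Antitone A := by
      intro m n hmn ω hω
      exact lt_of_le_of_lt (Nat.cast_le.mpr hmn : (m : ℝ) ≤ n) hω
    have hint : ⋂ n, A n = ∅ := by
      ext ω
      simp only [Set.mem_iInter, Set.mem_empty_iff_false, iff_false, not_forall]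
      obtain ⟨n, hn⟩ := exists_nat_ge ‖X ω‖
      exact ⟨n, by simp [hAdef, not_lt.2 hn]⟩
    have htend : Tendsto (fun n => Pr (A n)) atTop (𝓝 0) := by
      have := tendsto_measure_iInter_atTop (μ := Pr) (fun n => (hAm n).nullMeasurableSet)
        hanti ⟨0, measure_ne_top _ _⟩
      rw [hint] at this
      simpa [Function.comp_def] using this
    have hpos : (0 : ℝ≥0∞) < ENNReal.ofReal (lam / 4) := by
      rw [ENNReal.ofReal_pos]; linarith
    have := htend.eventually_lt_const hpos
    obtain ⟨N, hN⟩ := this.exists_forall_of_atTop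
    refine ⟨max N 1, le_max_right _ _, ?_⟩
    have hle : Pr (A (max N 1)) ≤ ENNReal.ofReal (lam / 4) := (hN _ (le_max_left _ _)).le
    calc (Pr (A (max N 1))).toReal ≤ (ENNReal.ofReal (lam / 4)).toReal :=
          ENNReal.toReal_mono (by simp) hle
      _ = lam / 4 := ENNReal.toReal_ofReal (by linarith)
  obtain ⟨M, hM1, hMle⟩ := hMex
  have hMpos : (0 : ℝ) < M := by exact_mod_cast hM1
  set B : Set (Ω × Ω) := {p | ‖X p.1‖ ≤ (M : ℝ) ∧ ‖X p.2‖ ≤ (M : ℝ)} with hBdef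
  have hBmeas : MeasurableSet B := by
    refine MeasurableSet.inter ?_ ?_
    · exact measurableSet_le ((hX.comp measurable_fst).norm) measurable_const
    · exact measurableSet_le ((hX.comp measurable_snd).norm) measurable_const
  have hBc : (μ Bᶜ).toReal ≤ lam / 2 := by
    set A : Set Ω := {ω | (M : ℝ) < ‖X ω‖} with hAdef
    have hAm : MeasurableSet A := measurableSet_lt measurable_const hX.norm
    have hsub : Bᶜ ⊆ (A ×ˢ Set.univ) ∪ (Set.univ ×ˢ A) := by
      intro p hp
      simp only [hBdef, Set.mem_compl_iff, Set.mem_setOf_eq, not_and_or, not_le] at hp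
      rcases hp with h | h
      · exact Or.inl ⟨h, trivial⟩
      · exact Or.inr ⟨trivial, h⟩
    have h1 : μ Bᶜ ≤ Pr A + Pr A := by
      calc μ Bᶜ ≤ μ ((A ×ˢ Set.univ) ∪ (Set.univ ×ˢ A)) := measure_mono hsub
        _ ≤ μ (A ×ˢ Set.univ) + μ (Set.univ ×ˢ A) := measure_union_le _ _
        _ = Pr A + Pr A := by
            rw [hμdef, Measure.prod_prod, Measure.prod_prod]
            simp [measure_univ]
    have h2 : (μ Bᶜ).toReal ≤ (Pr A + Pr A).toReal :=
      ENNReal.toReal_mono (by finiteness) h1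
    rw [ENNReal.toReal_add (measure_ne_top _ _) (measure_ne_top _ _)] at h2
    linarith [hMle]
  have hkey : ∀ c : EuclideanSpace ℝ (Fin d), ‖c‖ = 1 → lam / 2 ≤ ∫ p in B, f c p ∂μ := by
    intro c hc
    have hsplit : ∫ p in B, f c p ∂μ + ∫ p in Bᶜ, f c p ∂μ = q c :=
      integral_add_compl hBmeas (hfint c)
    have hupper : ∫ p in Bᶜ, f c p ∂μ ≤ lam / 2 := by
      have h1 : ∫ p in Bᶜ, f c p ∂μ ≤ ∫ _p in Bᶜ, (1 : ℝ) ∂μ := by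
        refine setIntegral_mono_on ((hfint c).integrableOn)
          (integrableOn_const (measure_ne_top _ _)) hBmeas.compl
          fun p _ => hf1 c p
      rw [setIntegral_const] at h1
      simp only [smul_eq_mul, mul_one, Measure.real] at h1
      linarith [hBc]
    have hlow : lam ≤ q c := hc₀min (by simp [Metric.mem_sphere, dist_zero_right, hc])
    linarith
  -- Cauchy-Schwarz bound
  have hCS : ∀ (c : EuclideanSpace ℝ (Fin d)) (ω : Ω), |S c ω| ≤ ‖c‖ * ‖X ω‖ := by
    intro c ω
    have h1 : S c ω = (inner ℝ c (X ω) : ℝ) := by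
      rw [hSdef, PiLp.inner_apply]
      simp [RCLike.inner_apply, starRingEnd_apply]
      exact Finset.sum_congr rfl fun i _ => mul_comm _ _
    rw [h1]
    exact abs_real_inner_le_norm c (X ω)
  -- the constants
  refine ⟨min 1 (1 / (2 * M)), lt_min one_pos (by positivity), lam / 16, by linarith, ?_⟩
  intro t ht
  have hδ1 : ‖t‖ ≤ 1 := ht.trans (min_le_left _ _)
  have hδ2 : ‖t‖ ≤ 1 / (2 * M) := ht.trans (min_le_right _ _)
  constructor
  swap
  · exact hsecond _ _ (by linarith) (sq_nonneg _)
  by_cases htz : t = 0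
  · subst htz
    have hz : ∀ ω : Ω, Complex.exp (Complex.I * ((∑ i, (0 : EuclideanSpace ℝ (Fin d)) i * X ω i : ℝ) : ℂ)) = 1 := by
      intro ω; norm_num
    rw [integral_congr_ae (Eventually.of_forall hz)]
    simp
  -- t ≠ 0
  set c : EuclideanSpace ℝ (Fin d) := (‖t‖⁻¹ : ℝ) • t with hcdef
  have htn : (0 : ℝ) < ‖t‖ := norm_pos_iff.2 htz
  have hc : ‖c‖ = 1 := norm_smul_inv_norm htz
  have hts : ∀ ω, S t ω = ‖t‖ * S c ω := by
    intro ω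
    rw [hSdef]
    simp only
    rw [Finset.mul_sum]
    refine Finset.sum_congr rfl fun i _ => ?_
    have hci : c i = ‖t‖⁻¹ * t i := rfl
    rw [hci]
    field_simp
  set z := ∫ ω, Complex.exp (Complex.I * ((S t ω : ℝ) : ℂ)) ∂Pr with hzdef
  have habs1 : ∀ r : ℝ, ‖Complex.exp (Complex.I * (r : ℂ))‖ = 1 := by
    intro r; rw [mul_comm]; exact Complex.norm_exp_ofReal_mul_I r
  -- Step A : |z|² = ∫ cos (g t) dμ
  have hgint : Integrable (fun p : Ω × Ω => Complex.exp (Complex.I * ((g t p : ℝ) : ℂ))) μ := by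
    refine (integrable_const (1 : ℝ)).mono'
      (Complex.measurable_exp.comp
        (measurable_const.mul (Complex.measurable_ofReal.comp (hgmeas t)))).aestronglyMeasurable
      (Eventually.of_forall fun p => ?_)
    simp [habs1]
  have hstepA : ‖z‖ ^ 2 = ∫ p, Real.cos (g t p) ∂μ := by
    have hconj : (starRingEnd ℂ) z = ∫ ω, Complex.exp (Complex.I * ((-(S t ω) : ℝ) : ℂ)) ∂Pr := by
      rw [hzdef, ← integral_conj]
      refine integral_congr_ae (Eventually.of_forall fun ω => ?_)
      beta_reduce
      rw [← Complex.exp_conj]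
      congr 1
      simp [Complex.conj_I]
    have hmul : z * (starRingEnd ℂ) z
        = ∫ p, Complex.exp (Complex.I * ((g t p : ℝ) : ℂ)) ∂μ := by
      rw [hconj, hzdef, hμdef,
        ← integral_prod_mul (fun ω => Complex.exp (Complex.I * ((S t ω : ℝ) : ℂ)))
          (fun ω => Complex.exp (Complex.I * ((-(S t ω) : ℝ) : ℂ)))]
      refine integral_congr_ae (Eventually.of_forall fun p => ?_)
      beta_reduce
      rw [← Complex.exp_add]
      congr 1
      rw [hgdef]
      push_cast
      ring
    have h1 : ‖z‖ ^ 2 = (z * (starRingEnd ℂ) z).re := by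
      rw [Complex.mul_conj]
      simp [Complex.sq_norm]
    have h2 := ContinuousLinearMap.integral_comp_comm Complex.reCLM hgint
    simp only [Complex.reCLM_apply] at h2
    rw [h1, hmul, ← h2]
    refine integral_congr_ae (Eventually.of_forall fun p => ?_)
    beta_reduce
    rw [mul_comm]
    exact Complex.exp_ofReal_mul_I_re (g t p)
  -- Step B : ∫ cos (g t) dμ ≤ 1 - (lam/8) ‖t‖²
  have hcosint : Integrable (fun p => Real.cos (g t p)) μ := by
    refine (integrable_const (1 : ℝ)).mono'
      (Real.measurable_cos.comp (hgmeas t)).aestronglyMeasurable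
      (Eventually.of_forall fun p => ?_)
    rw [Real.norm_eq_abs]
    exact Real.abs_cos_le_one _
  have honeminus : Integrable (fun p => 1 - Real.cos (g t p)) μ :=
    (integrable_const 1).sub hcosint
  have hgB : ∀ p ∈ B, |g t p| ≤ 1 := by
    intro p hp
    obtain ⟨h1, h2⟩ := hp
    have ha := hCS t p.1
    have hb := hCS t p.2
    have h3 : |g t p| ≤ |S t p.1| + |S t p.2| := by
      rw [hgdef]; exact abs_sub _ _
    have h4 : ‖t‖ * ‖X p.1‖ ≤ ‖t‖ * M :=
      mul_le_mul_of_nonneg_left h1 (norm_nonneg t)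
    have h5 : ‖t‖ * ‖X p.2‖ ≤ ‖t‖ * M :=
      mul_le_mul_of_nonneg_left h2 (norm_nonneg t)
    have h6 : ‖t‖ * (M : ℝ) ≤ 1 / 2 := by
      have h7 : ‖t‖ * (2 * (M : ℝ)) ≤ 1 := by
        rwa [le_div_iff₀ (by positivity)] at hδ2
      have h8 : ‖t‖ * (2 * (M : ℝ)) = 2 * (‖t‖ * M) := by ring
      linarith
    linarith
  have hstepB : ∫ p, Real.cos (g t p) ∂μ ≤ 1 - lam / 8 * ‖t‖ ^ 2 := by
    have heq : ∫ p, Real.cos (g t p) ∂μ = 1 - ∫ p, (1 - Real.cos (g t p)) ∂μ := by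
      rw [integral_sub (integrable_const 1) hcosint]
      simp
    rw [heq]
    have h2 : ∫ p in B, (1 - Real.cos (g t p)) ∂μ ≤ ∫ p, (1 - Real.cos (g t p)) ∂μ :=
      setIntegral_le_integral honeminus
        (Eventually.of_forall fun p => by
          simp only [Pi.zero_apply]
          nlinarith [Real.cos_le_one (g t p)])
    have h3 : ∫ p in B, f c p * (‖t‖ ^ 2 / 4) ∂μ ≤ ∫ p in B, (1 - Real.cos (g t p)) ∂μ := by
      refine setIntegral_mono_on ((((hfint c).mul_const _)).integrableOn)
        (honeminus.integrableOn) hBmeas fun p hp => ?_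
      have hgc : g t p = ‖t‖ * g c p := by rw [hgdef]; simp only; rw [hts, hts]; ring
      have hfc : f c p ≤ (g c p) ^ 2 := min_le_left _ _
      have hcos := cos_aux' (hgB p hp)
      rw [hgc] at hcos ⊢
      nlinarith [mul_le_mul_of_nonneg_right hfc (by positivity : (0:ℝ) ≤ ‖t‖ ^ 2 / 4)]
    have h4 : ∫ p in B, f c p * (‖t‖ ^ 2 / 4) ∂μ
        = (∫ p in B, f c p ∂μ) * (‖t‖ ^ 2 / 4) := by
      exact integral_mul_const _ _
    have h5 := hkey c hc
    have h6 : lam / 2 * (‖t‖ ^ 2 / 4) ≤ (∫ p in B, f c p ∂μ) * (‖t‖ ^ 2 / 4) := by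
      apply mul_le_mul_of_nonneg_right h5 (by positivity)
    have : lam / 8 * ‖t‖ ^ 2 ≤ ∫ p, (1 - Real.cos (g t p)) ∂μ := by
      calc lam / 8 * ‖t‖ ^ 2 = lam / 2 * (‖t‖ ^ 2 / 4) := by ring
        _ ≤ (∫ p in B, f c p ∂μ) * (‖t‖ ^ 2 / 4) := h6
        _ = ∫ p in B, f c p * (‖t‖ ^ 2 / 4) ∂μ := h4.symm
        _ ≤ ∫ p in B, (1 - Real.cos (g t p)) ∂μ := h3
        _ ≤ ∫ p, (1 - Real.cos (g t p)) ∂μ := h2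
    linarith
  -- conclusion
  have hfinal : ‖z‖ ^ 2 ≤ 1 - lam / 8 * ‖t‖ ^ 2 := hstepA.trans_le hstepB
  have h0 : (0 : ℝ) ≤ ‖z‖ := norm_nonneg _
  have hk1 : lam / 16 * ‖t‖ ^ 2 ≤ 1 / 16 := by nlinarith
  show ‖z‖ ≤ 1 - lam / 16 * ‖t‖ ^ 2
  by_contra hcon
  push_neg at hcon
  nlinarith [sq_nonneg ‖t‖, sq_nonneg (lam * ‖t‖ ^ 2)]
end

section
/- Let (Z_k)_{k≥1} be i.i.d. complex random variables and fix r > 0 such that E[ |r − |Z_1||^{−1/2} ] < +∞. Then almost surely, sup_{z ∈ C(0,r)} |S_n(z)| = O(n³) as n → ∞, where S_n(z) = ∑_{k=1}^n 1/(z − Z_k); in particular log^+ ‖S_n‖_{C(0,r)} = O(log n). -/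
open MeasureTheory ProbabilityTheory Filter
open scoped ENNReal

/-- The modulus of the logarithmic derivative `S_n(z) = ∑_{k<n} 1/(z - ZZ k)` of
`P_n(X) = ∏_{k<n} (X - ZZ k)`, with the convention that `|S_n(z)| = +∞` if `z` is a pole
of `S_n`, i.e. if `z` is one of the points `ZZ k`, `k < n`. -/
noncomputable def logDerivAbs (ZZ : ℕ → ℂ) (n : ℕ) (z : ℂ) : ℝ≥0∞ :=
  if ∃ k < n, ZZ k = z then ⊤ else (‖∑ k ∈ Finset.range n, (z - ZZ k)⁻¹‖₊ : ℝ≥0∞)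

lemma sum_sq_le_sq_sum {ι : Type*} (s : Finset ι) (f : ι → ℝ) (hf : ∀ i ∈ s, 0 ≤ f i) :
    ∑ i ∈ s, (f i) ^ 2 ≤ (∑ i ∈ s, f i) ^ 2 := by
  have h : ∀ i ∈ s, (f i) ^ 2 ≤ f i * ∑ j ∈ s, f j := by
    intro i hi
    rw [sq]
    exact mul_le_mul_of_nonneg_left (Finset.single_le_sum hf hi) (hf i hi)
  calc ∑ i ∈ s, (f i) ^ 2 ≤ ∑ i ∈ s, f i * ∑ j ∈ s, f j := Finset.sum_le_sum h
    _ = (∑ i ∈ s, f i) ^ 2 := by rw [← Finset.sum_mul, sq]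

/-- If `(Z_k)` are i.i.d. complex random variables and `r > 0` is such that
`E[|r - |Z_1||^{-1/2}] < ∞`, then almost surely `sup_{z ∈ C(0,r)} |S_n(z)| = O(n³)`;
in particular `log⁺ ‖S_n‖_{C(0,r)} = O(log n)`. -/
theorem as_cubic_bound_on_circle
    {Ω : Type*} [MeasurableSpace Ω] (Pr : Measure Ω) [IsProbabilityMeasure Pr]
    (Z : ℕ → Ω → ℂ) (hmeas : ∀ k, Measurable (Z k))
    (hindep : iIndepFun Z Pr)
    (hident : ∀ k, Measure.map (Z k) Pr = Measure.map (Z 0) Pr)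
    (r : ℝ) (hr : 0 < r)
    (hmom : ∫⁻ ω, (ENNReal.ofReal |r - ‖Z 0 ω‖|) ^ (-(2⁻¹ : ℝ)) ∂Pr < ⊤) :
    ∀ᵐ ω ∂Pr,
      (∃ C : ℝ, ∀ n : ℕ, 1 ≤ n →
        (⨆ z ∈ Metric.sphere (0 : ℂ) r, logDerivAbs (fun k => Z k ω) n z) ≤
          ENNReal.ofReal (C * (n : ℝ) ^ 3)) ∧
      (∃ K : ℝ, ∀ n : ℕ, 2 ≤ n →
        (⨆ z ∈ Metric.sphere (0 : ℂ) r, logDerivAbs (fun k => Z k ω) n z) ≠ ⊤ ∧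
        max (Real.log ((⨆ z ∈ Metric.sphere (0 : ℂ) r,
            logDerivAbs (fun k => Z k ω) n z).toReal)) 0 ≤ K * Real.log n) := by
  classical
  -- the real-valued function g z = |r - |z||^{-1/2}
  set g : ℂ → ℝ := fun z => |r - ‖z‖| ^ (-(2⁻¹ : ℝ)) with hg_def
  have hg_meas : Measurable g := by
    have : Measurable fun z : ℂ => |r - ‖z‖| :=
      (measurable_const.sub continuous_norm.measurable).abs
    exact this.pow measurable_const
  have hg_nonneg : ∀ z, 0 ≤ g z := fun z => Real.rpow_nonneg (abs_nonneg _) _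
  set X : ℕ → Ω → ℝ := fun k ω => g (Z k ω) with hX_def
  have hXmeas : ∀ k, Measurable (X k) := fun k => hg_meas.comp (hmeas k)
  -- integrability of X 0
  have hint : Integrable (X 0) Pr := by
    refine ⟨(hXmeas 0).aestronglyMeasurable, ?_⟩
    rw [hasFiniteIntegral_iff_norm]
    refine lt_of_le_of_lt (lintegral_mono fun ω => ?_) hmom
    rcases eq_or_lt_of_le (abs_nonneg (r - ‖Z 0 ω‖)) with h | h
    · simp [hX_def, hg_def, ← h, Real.zero_rpow (by norm_num : (-(2⁻¹:ℝ)) ≠ 0)]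
    · rw [ENNReal.ofReal_rpow_of_pos h]
      apply le_of_eq
      congr 1
      rw [Real.norm_eq_abs, abs_of_nonneg (hg_nonneg _)]
  -- identical distribution of X k
  have hid : ∀ k, IdentDistrib (X k) (X 0) Pr Pr := by
    intro k
    refine ⟨(hXmeas k).aemeasurable, (hXmeas 0).aemeasurable, ?_⟩
    show Measure.map (g ∘ Z k) Pr = Measure.map (g ∘ Z 0) Pr
    rw [← Measure.map_map hg_meas (hmeas k), ← Measure.map_map hg_meas (hmeas 0), hident k]
  -- pairwise independence of X
  have hpind : Pairwise (Function.onFun (fun f g => IndepFun f g Pr) X) := by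
    intro i j hij
    exact (hindep.indepFun hij).comp hg_meas hg_meas
  -- strong law of large numbers
  have hlaw := strong_law_ae X hint hpind hid
  -- a.s. no Z k lies on the circle
  have hs : MeasurableSet {z : ℂ | ‖z‖ = r} :=
    continuous_norm.measurable (measurableSet_singleton r)
  have h0 : Pr {ω | ‖Z 0 ω‖ = r} = 0 := by
    have hF : Measurable fun ω =>
        (ENNReal.ofReal |r - ‖Z 0 ω‖|) ^ (-(2⁻¹ : ℝ)) := by
      exact (ENNReal.measurable_ofReal.comp
        ((measurable_const.sub continuous_norm.measurable).abs.comp (hmeas 0))).pow measurable_const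
    have hae := ae_lt_top hF hmom.ne
    rw [ae_iff] at hae
    refine measure_mono_null (fun ω hω => ?_) hae
    simp only [Set.mem_setOf_eq] at hω ⊢
    rw [hω, sub_self, abs_zero, ENNReal.ofReal_zero,
      ENNReal.zero_rpow_of_neg (by norm_num : (-(2⁻¹:ℝ)) < 0)]
    simp
  have hne : ∀ᵐ ω ∂Pr, ∀ k, ‖Z k ω‖ ≠ r := by
    rw [ae_all_iff]
    intro k
    have hk : Pr {ω | ‖Z k ω‖ = r} = 0 := by
      have h1 : {ω | ‖Z k ω‖ = r} = Z k ⁻¹' {z | ‖z‖ = r} := rfl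
      have h2 : {ω | ‖Z 0 ω‖ = r} = Z 0 ⁻¹' {z | ‖z‖ = r} := rfl
      rw [h1, ← Measure.map_apply (hmeas k) hs, hident k,
        Measure.map_apply (hmeas 0) hs, ← h2]
      exact h0
    rw [ae_iff]
    simpa using hk
  filter_upwards [hlaw, hne] with ω hlim hner
  -- extract a linear bound on partial sums of X
  obtain ⟨B, hB⟩ := hlim.bddAbove_range
  set C0 : ℝ := max B 0 with hC0
  have hC0nn : 0 ≤ C0 := le_max_right _ _
  have hsum : ∀ n : ℕ, 1 ≤ n → ∑ k ∈ Finset.range n, X k ω ≤ C0 * n := by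
    intro n hn
    have h1 : (n : ℝ)⁻¹ • (∑ i ∈ Finset.range n, X i ω) ≤ B :=
      hB (Set.mem_range_self n)
    have hnpos : (0:ℝ) < n := by exact_mod_cast hn
    have := h1.trans (le_max_left B 0)
    rw [smul_eq_mul, inv_mul_le_iff₀ hnpos] at this
    linarith [this]
  set C' : ℝ := C0 ^ 2 + 1 with hC'
  have hC'1 : (1:ℝ) ≤ C' := by nlinarith
  -- the key deterministic bound
  have hkey : ∀ n : ℕ, 1 ≤ n →
      (⨆ z ∈ Metric.sphere (0 : ℂ) r, logDerivAbs (fun k => Z k ω) n z) ≤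
        ENNReal.ofReal (C' * (n : ℝ) ^ 3) := by
    intro n hn
    refine iSup₂_le fun z hz => ?_
    have hzr : ‖z‖ = r := by
      simpa using (mem_sphere_zero_iff_norm.mp hz)
    have hnopole : ¬ ∃ k < n, Z k ω = z := by
      rintro ⟨k, -, hk⟩
      exact hner k (by rw [hk, hzr])
    rw [logDerivAbs, if_neg hnopole, ← ENNReal.ofReal_coe_nnreal, coe_nnnorm]
    refine ENNReal.ofReal_le_ofReal ?_
    have hterm : ∀ k ∈ Finset.range n, ‖(z - Z k ω)⁻¹‖ ≤ (X k ω) ^ 2 := by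
      intro k _
      have hposa : 0 < |r - ‖Z k ω‖| :=
        abs_pos.mpr (sub_ne_zero.mpr fun h => hner k h.symm)
      have hle : |r - ‖Z k ω‖| ≤ ‖z - Z k ω‖ := by
        have := abs_norm_sub_norm_le z (Z k ω)
        simpa [hzr] using this
      have hXsq : (X k ω) ^ 2 = |r - ‖Z k ω‖|⁻¹ := by
        rw [hX_def]
        simp only
        rw [← Real.rpow_natCast (g (Z k ω)) 2, hg_def]
        rw [← Real.rpow_mul (abs_nonneg _)]
        norm_num
        rw [Real.rpow_neg_one]
      rw [norm_inv, hXsq]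
      exact inv_anti₀ hposa hle
    have h1 : ‖∑ k ∈ Finset.range n, (z - Z k ω)⁻¹‖ ≤ ∑ k ∈ Finset.range n, (X k ω) ^ 2 :=
      (norm_sum_le _ _).trans (Finset.sum_le_sum hterm)
    have h2 : ∑ k ∈ Finset.range n, (X k ω) ^ 2 ≤ (∑ k ∈ Finset.range n, X k ω) ^ 2 :=
      sum_sq_le_sq_sum _ _ fun i _ => hg_nonneg _
    have h3 : (∑ k ∈ Finset.range n, X k ω) ^ 2 ≤ (C0 * n) ^ 2 := by
      have hSnn : 0 ≤ ∑ k ∈ Finset.range n, X k ω :=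
        Finset.sum_nonneg fun i _ => hg_nonneg _
      exact pow_le_pow_left₀ hSnn (hsum n hn) 2
    have hn1 : (1:ℝ) ≤ n := by exact_mod_cast hn
    nlinarith [h1, h2, h3, sq_nonneg C0, sq_nonneg ((n:ℝ))]
  refine ⟨⟨C', hkey⟩, ⟨Real.log C' / Real.log 2 + 3, fun n hn => ?_⟩⟩
  have hn1 : 1 ≤ n := le_trans (by norm_num) hn
  have hb := hkey n hn1
  have hntop : (⨆ z ∈ Metric.sphere (0 : ℂ) r, logDerivAbs (fun k => Z k ω) n z) ≠ ⊤ :=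
    (lt_of_le_of_lt hb ENNReal.ofReal_lt_top).ne
  refine ⟨hntop, ?_⟩
  have hnr : (2:ℝ) ≤ n := by exact_mod_cast hn
  have hnpos : (0:ℝ) < n := by linarith
  have hC'pos : (0:ℝ) < C' := by linarith
  have htoReal : (⨆ z ∈ Metric.sphere (0 : ℂ) r, logDerivAbs (fun k => Z k ω) n z).toReal
      ≤ C' * (n:ℝ) ^ 3 := by
    refine ENNReal.toReal_le_of_le_ofReal ?_ hb
    positivity
  set t := (⨆ z ∈ Metric.sphere (0 : ℂ) r, logDerivAbs (fun k => Z k ω) n z).toReal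
  have htnn : 0 ≤ t := ENNReal.toReal_nonneg
  have hn3 : (1:ℝ) ≤ (n:ℝ) ^ 3 := by
    have : (1:ℝ) ≤ (n:ℝ) := by linarith
    exact one_le_pow₀ this
  have hCn1 : (1:ℝ) ≤ C' * (n:ℝ) ^ 3 := by nlinarith [hC'1, hn3]
  have hlogCn : 0 ≤ Real.log (C' * (n:ℝ) ^ 3) := Real.log_nonneg hCn1
  have hlogt : Real.log t ≤ Real.log (C' * (n:ℝ) ^ 3) := by
    rcases eq_or_lt_of_le htnn with h | h
    · rw [← h, Real.log_zero]; exact hlogCn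
    · exact Real.log_le_log h htoReal
  have hsplit : Real.log (C' * (n:ℝ) ^ 3) = Real.log C' + 3 * Real.log n := by
    rw [Real.log_mul (ne_of_gt hC'pos) (by positivity), Real.log_pow]
    norm_num
  have hlog2 : (0:ℝ) < Real.log 2 := Real.log_pos (by norm_num)
  have hlogn2 : Real.log 2 ≤ Real.log n := Real.log_le_log (by norm_num) hnr
  have hlognpos : 0 < Real.log n := lt_of_lt_of_le hlog2 hlogn2
  have hlogC' : 0 ≤ Real.log C' := Real.log_nonneg hC'1
  have hC'bd : Real.log C' ≤ Real.log C' / Real.log 2 * Real.log n := by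
    rw [div_mul_eq_mul_div, le_div_iff₀ hlog2]
    exact mul_le_mul_of_nonneg_left hlogn2 hlogC'
  have : Real.log (C' * (n:ℝ) ^ 3) ≤ (Real.log C' / Real.log 2 + 3) * Real.log n := by
    rw [hsplit, add_mul]
    linarith
  exact max_le (hlogt.trans this) (le_trans hlogCn this)
end

section
/- Let P be a nonconstant complex polynomial with multiset of roots 𝒵 and multiset of critical points 𝒞 (the roots of P′), both counted with multiplicity, and let S = P′/P. Let u(z) = (αz + β)/(γz + δ) be an invertible Möbius transformation (αδ − βγ ≠ 0), set a := u^{−1}(0) and C′ := u^{−1}(C), where C is the unit circle. If a is neither a zero nor a pole of S, then ∑_{ρ ∈ 𝒞} log^-|u(ρ)| − ∑_{ζ ∈ 𝒵} log^-|u(ζ)| ≤ log (sup_{z ∈ C′} |S(z)|) − log |S(a)|. -/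
open MeasureTheory Polynomial
open scoped ENNReal

/-- The negative part of the logarithm: `log⁻(x) = -log(x)` for `0 < x < 1`, `0` otherwise. -/
noncomputable def logNeg (x : ℝ) : ℝ := max (-Real.log x) 0

/-- The modulus of the logarithmic derivative `S = P'/P` of a polynomial `P`, with the
convention that `|S(z)| = +∞` at the poles of `S`, i.e. at the roots of `P`. -/
noncomputable def polyLogDerivAbs (P : Polynomial ℂ) (z : ℂ) : ℝ≥0∞ :=
  if P.eval z = 0 then ⊤ else (‖P.derivative.eval z / P.eval z‖₊ : ℝ≥0∞)

/-- Local replacement for the removed `Complex.abs`. -/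
noncomputable def Complex.abs : AbsoluteValue ℂ ℝ where
  toFun z := ‖z‖
  map_mul' := norm_mul
  nonneg' := norm_nonneg
  eq_zero' _ := norm_eq_zero
  add_le' := norm_add_le

lemma Complex.norm_eq_abs (z : ℂ) : ‖z‖ = Complex.abs z := rfl

lemma Complex.abs_conj (z : ℂ) : Complex.abs ((starRingEnd ℂ) z) = Complex.abs z :=
  Complex.norm_conj z

lemma Complex.abs_natCast (n : ℕ) : Complex.abs (n : ℂ) = n := Complex.norm_natCast n

open scoped Classical

lemma exp_msum (s : Multiset ℝ) : (s.map Real.exp).prod = Real.exp s.sum := by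
  induction s using Multiset.induction with
  | empty => simp
  | cons a s ih => simp [Real.exp_add, ih]

lemma abs_eval_eq (Q : ℂ[X]) (x : ℂ) :
    Complex.abs (Q.eval x) =
      Complex.abs Q.leadingCoeff * ((Q.roots.map fun b => Complex.abs (x - b)).prod) := by
  conv_lhs => rw [(IsAlgClosed.splits Q).eq_prod_roots]
  rw [eval_mul, eval_C, map_mul, eval_multiset_prod, Multiset.map_map,
    map_multiset_prod, Multiset.map_map]
  simp

lemma prod_abs_linear (s : Multiset ℂ) (e x : ℂ) :
    (s.map fun b => Complex.abs (e * (x - b))).prod =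
      Complex.abs e ^ (Multiset.card s) * (s.map fun b => Complex.abs (x - b)).prod := by
  have : (s.map fun b => Complex.abs (e * (x - b))) =
      s.map fun b => Complex.abs e * Complex.abs (x - b) := by
    apply Multiset.map_congr rfl; intro b _; exact map_mul Complex.abs _ _
  rw [this, Multiset.prod_map_mul]
  congr 1
  simp [Multiset.map_const', Multiset.prod_replicate]

noncomputable def mobFac (α β γ δ b : ℂ) : Polynomial ℂ :=
  if γ * b + δ ≠ 0 ∧ Complex.abs ((α * b + β) / (γ * b + δ)) < 1
  then Polynomial.C (γ * b + δ) *
    (1 - Polynomial.C ((starRingEnd ℂ) ((α * b + β) / (γ * b + δ))) * Polynomial.X)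
  else Polynomial.C (γ * b + δ) * Polynomial.X - Polynomial.C (α * b + β)

lemma abs_one_sub_conj_mul {w c : ℂ} (hw : Complex.abs w = 1) :
    Complex.abs (1 - (starRingEnd ℂ) c * w) = Complex.abs (w - c) := by
  have hww : (starRingEnd ℂ) w * w = 1 := by
    rw [mul_comm, Complex.mul_conj, ← Complex.sq_norm, Complex.norm_eq_abs, hw]; norm_num
  have : (1 : ℂ) - (starRingEnd ℂ) c * w = ((starRingEnd ℂ) (w - c)) * w := by
    rw [map_sub, sub_mul, hww]
  rw [this, map_mul, Complex.abs_conj, hw, mul_one]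

lemma mobFac_abs_circle {α β γ δ b w : ℂ} (hw : Complex.abs w = 1) :
    Complex.abs ((mobFac α β γ δ b).eval w) =
      Complex.abs ((γ * b + δ) * w - (α * b + β)) := by
  unfold mobFac
  split_ifs with h
  · obtain ⟨h1, -⟩ := h
    rw [eval_mul, eval_C, map_mul, eval_sub, eval_one, eval_mul, eval_C, eval_X,
      abs_one_sub_conj_mul hw]
    rw [← map_mul, mul_sub, mul_div_cancel₀ _ h1]
  · simp

lemma mobFac_eval_eq {α β γ δ b w : ℂ} (he : α - γ * w ≠ 0) :
    (γ * b + δ) * w - (α * b + β) = (α - γ * w) * ((δ * w - β) / (α - γ * w) - b) := by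
  field_simp
  ring

lemma mobFac_abs_zero {α β γ δ b : ℂ} (hb : α * b + β ≠ 0) :
    Complex.abs ((mobFac α β γ δ b).eval 0) =
      Complex.abs (α * b + β) *
        Real.exp (logNeg (Complex.abs ((α * b + β) / (γ * b + δ)))) := by
  unfold mobFac logNeg
  split_ifs with h
  · obtain ⟨h1, h2⟩ := h
    have hc : Complex.abs ((α * b + β) / (γ * b + δ)) =
        Complex.abs (α * b + β) / Complex.abs (γ * b + δ) := map_div₀ _ _ _
    have hcpos : 0 < Complex.abs ((α * b + β) / (γ * b + δ)) := by
      have : (α * b + β) / (γ * b + δ) ≠ 0 := div_ne_zero hb h1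
      exact Complex.abs.pos this
    have hmax : max (-Real.log (Complex.abs ((α * b + β) / (γ * b + δ)))) 0 =
        -Real.log (Complex.abs ((α * b + β) / (γ * b + δ))) := by
      apply max_eq_left
      have := Real.log_neg hcpos h2
      linarith
    rw [hmax, Real.exp_neg, Real.exp_log hcpos, hc]
    simp only [eval_mul, eval_C, eval_sub, eval_one, eval_X, mul_zero, sub_zero, mul_one]
    have h1' : Complex.abs (γ * b + δ) ≠ 0 := Complex.abs.ne_zero h1
    have hb' : Complex.abs (α * b + β) ≠ 0 := Complex.abs.ne_zero hb
    field_simp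
    rw [mul_comm b α, div_self hb']
  · have hmax : max (-Real.log (Complex.abs ((α * b + β) / (γ * b + δ)))) 0 = 0 := by
      rcases eq_or_ne (γ * b + δ) 0 with h0 | h0
      · simp [h0]
      · have h2 : 1 ≤ Complex.abs ((α * b + β) / (γ * b + δ)) := by
          by_contra hlt
          exact h ⟨h0, by linarith [not_le.mp hlt]⟩
        apply max_eq_right
        have := Real.log_nonneg h2
        linarith
    rw [hmax]
    rw [Real.exp_zero, mul_one]
    simp only [eval_sub, eval_mul, eval_C, eval_X, mul_zero, zero_sub]
    rw [map_neg_eq_map]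

lemma abs_prod_mobFac_circle (α β γ δ : ℂ) (Q : Polynomial ℂ) {w : ℂ} (hw : Complex.abs w = 1)
    (he : α - γ * w ≠ 0) :
    Complex.abs (((Q.roots.map (mobFac α β γ δ)).prod).eval w) * Complex.abs Q.leadingCoeff =
      Complex.abs (α - γ * w) ^ (Multiset.card Q.roots) *
        Complex.abs (Q.eval ((δ * w - β) / (α - γ * w))) := by
  rw [eval_multiset_prod, Multiset.map_map, map_multiset_prod, Multiset.map_map]
  have h1 : Q.roots.map (⇑Complex.abs ∘ eval w ∘ mobFac α β γ δ) =
      Q.roots.map (fun b =>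
        Complex.abs ((α - γ * w) * ((δ * w - β) / (α - γ * w) - b))) :=
    Multiset.map_congr rfl (fun b _ => by
      show Complex.abs ((mobFac α β γ δ b).eval w) = _
      rw [mobFac_abs_circle hw, mobFac_eval_eq he])
  rw [h1, prod_abs_linear, abs_eval_eq Q]
  ring

lemma abs_prod_mobFac_zero (α β γ δ : ℂ) (Q : Polynomial ℂ) (hα : α ≠ 0)
    (hroot : ∀ b ∈ Q.roots, α * b + β ≠ 0) :
    Complex.abs (((Q.roots.map (mobFac α β γ δ)).prod).eval 0) * Complex.abs Q.leadingCoeff =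
      Complex.abs α ^ (Multiset.card Q.roots) * Complex.abs (Q.eval (-(β / α))) *
        Real.exp ((Q.roots.map fun b =>
          logNeg (Complex.abs ((α * b + β) / (γ * b + δ)))).sum) := by
  rw [eval_multiset_prod, Multiset.map_map, map_multiset_prod, Multiset.map_map]
  have h1 : Q.roots.map (⇑Complex.abs ∘ eval 0 ∘ mobFac α β γ δ) =
      Q.roots.map (fun b => Complex.abs (α * (-(β / α) - b)) *
        Real.exp (logNeg (Complex.abs ((α * b + β) / (γ * b + δ))))) := by
    apply Multiset.map_congr rfl
    intro b hb
    show Complex.abs ((mobFac α β γ δ b).eval 0) = _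
    rw [mobFac_abs_zero (hroot b hb)]
    rw [show α * (-(β / α) - b) = -(α * b + β) by field_simp; ring, map_neg_eq_map]
  have hmm : Multiset.map
      (fun b => Real.exp (logNeg (Complex.abs ((α * b + β) / (γ * b + δ))))) Q.roots =
      Multiset.map Real.exp
        (Multiset.map (fun b => logNeg (Complex.abs ((α * b + β) / (γ * b + δ)))) Q.roots) := by
    rw [Multiset.map_map]; rfl
  rw [h1, Multiset.prod_map_mul, prod_abs_linear, hmm, exp_msum, abs_eval_eq Q]
  ring

/-- **One-sided Jensen estimate for the logarithmic derivative.** Let `P` be a nonconstant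
complex polynomial with roots `𝒵` and critical points `𝒞` (both with multiplicity), and let
`S = P'/P`. Let `u(z) = (αz+β)/(γz+δ)` be an invertible Möbius transformation, let
`a = u⁻¹(0)` and `C' = u⁻¹(C)` where `C` is the unit circle. If `a` is neither a zero nor a
pole of `S`, then
`∑_{ρ ∈ 𝒞} log⁻|u(ρ)| − ∑_{ζ ∈ 𝒵} log⁻|u(ζ)| ≤ log ‖S‖_{C'} − log |S(a)|`. -/
theorem jensen_mobius_inequality
    (P : Polynomial ℂ) (hP : 0 < P.natDegree)
    (α β γ δ : ℂ) (hdet : α * δ - β * γ ≠ 0)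
    (a : ℂ) (ha : α * a + β = 0)
    (haZ : P.eval a ≠ 0) (haC : P.derivative.eval a ≠ 0) :
    (((P.derivative.roots.map fun ρ =>
          logNeg (‖(α * ρ + β) / (γ * ρ + δ)‖)).sum -
        (P.roots.map fun ζ =>
          logNeg (‖(α * ζ + β) / (γ * ζ + δ)‖)).sum : ℝ) : EReal) ≤
      ENNReal.log (⨆ z ∈ {w : ℂ | γ * w + δ ≠ 0 ∧
          ‖(α * w + β) / (γ * w + δ)‖ = 1}, polyLogDerivAbs P z) -
        ((Real.log (‖P.derivative.eval a / P.eval a‖) : ℝ) : EReal) := by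
  classical
  simp only [Complex.norm_eq_abs]
  have hα : α ≠ 0 := by
    intro h
    rw [h] at ha
    simp only [zero_mul, zero_add] at ha
    rw [h, ha] at hdet
    simp at hdet
  have haa : -(β / α) = a := by
    field_simp
    linear_combination -ha
  have hPne : P ≠ 0 := fun h => haZ (by simp [h])
  have hP'ne : P.derivative ≠ 0 := fun h => haC (by simp [h])
  have hlcne : P.leadingCoeff ≠ 0 := leadingCoeff_ne_zero.mpr hPne
  have hlc'ne : P.derivative.leadingCoeff ≠ 0 := leadingCoeff_ne_zero.mpr hP'ne
  have hrootZ : ∀ b ∈ P.roots, α * b + β ≠ 0 := by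
    intro b hb h
    have hba : b = a := mul_left_cancel₀ hα (by linear_combination h - ha)
    rw [hba] at hb
    exact haZ ((mem_roots hPne).mp hb)
  have hrootC : ∀ b ∈ P.derivative.roots, α * b + β ≠ 0 := by
    intro b hb h
    have hba : b = a := mul_left_cancel₀ hα (by linear_combination h - ha)
    rw [hba] at hb
    exact haC ((mem_roots hP'ne).mp hb)
  have hcardZ : Multiset.card P.roots = P.natDegree :=
    splits_iff_card_roots.mp (IsAlgClosed.splits P)
  have hdegC : P.derivative.natDegree = P.natDegree - 1 :=
    natDegree_eq_of_degree_eq_some (degree_derivative_eq P hP)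
  have hcardC : Multiset.card P.derivative.roots = P.natDegree - 1 := by
    rw [splits_iff_card_roots.mp (IsAlgClosed.splits P.derivative), hdegC]
  have hn1 : P.natDegree - 1 + 1 = P.natDegree := Nat.succ_pred_eq_of_pos hP
  have hlc' : P.derivative.leadingCoeff = (P.natDegree : ℂ) * P.leadingCoeff := by
    rw [Polynomial.leadingCoeff, hdegC, coeff_derivative, hn1, Polynomial.leadingCoeff]
    have hc : ((P.natDegree - 1 : ℕ) : ℂ) + 1 = (P.natDegree : ℂ) := by
      exact_mod_cast congrArg (Nat.cast : ℕ → ℂ) hn1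
    rw [hc]
    ring
  set M := ⨆ z ∈ {w : ℂ | γ * w + δ ≠ 0 ∧
      Complex.abs ((α * w + β) / (γ * w + δ)) = 1}, polyLogDerivAbs P z with hM
  rcases eq_or_ne M ⊤ with hMtop | hMtop
  · rw [hMtop, ENNReal.log_top, EReal.top_sub_coe]
    exact le_top
  have hMr0 : (0 : ℝ) ≤ M.toReal := ENNReal.toReal_nonneg
  have hCset : ∀ z : ℂ, γ * z + δ ≠ 0 → Complex.abs ((α * z + β) / (γ * z + δ)) = 1 →
      P.eval z ≠ 0 ∧ Complex.abs (P.derivative.eval z / P.eval z) ≤ M.toReal := by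
    intro z h1 h2
    have hmem : z ∈ {w : ℂ | γ * w + δ ≠ 0 ∧
        Complex.abs ((α * w + β) / (γ * w + δ)) = 1} := ⟨h1, h2⟩
    have hzS : polyLogDerivAbs P z ≤ M := hM ▸ le_biSup _ hmem
    unfold polyLogDerivAbs at hzS
    by_cases h0 : P.eval z = 0
    · rw [if_pos h0] at hzS
      exact absurd (top_le_iff.mp hzS) hMtop
    · refine ⟨h0, ?_⟩
      rw [if_neg h0] at hzS
      have := ENNReal.toReal_mono hMtop hzS
      simpa [Complex.norm_eq_abs] using this
  have hDne : ∀ w : ℂ, Complex.abs w ≤ 1 →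
      (((P.roots.map (mobFac α β γ δ)).prod).eval w) ≠ 0 := by
    intro w hw
    rw [eval_multiset_prod, Multiset.map_map]
    refine Multiset.prod_ne_zero ?_
    intro h0
    obtain ⟨b, hb, hb0⟩ := Multiset.mem_map.mp h0
    have hb0' : (mobFac α β γ δ b).eval w = 0 := hb0
    revert hb0'
    unfold mobFac
    split_ifs with h
    · obtain ⟨h1, h2⟩ := h
      simp only [eval_mul, eval_C, eval_sub, eval_one, eval_X]
      intro h0'
      rcases mul_eq_zero.mp h0' with hc | hc
      · exact h1 hc
      · have hcw : (starRingEnd ℂ) ((α * b + β) / (γ * b + δ)) * w = 1 :=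
          (sub_eq_zero.mp hc).symm
        have habs : Complex.abs ((α * b + β) / (γ * b + δ)) * Complex.abs w = 1 := by
          have := congrArg Complex.abs hcw
          rwa [map_mul, Complex.abs_conj, map_one] at this
        nlinarith [Complex.abs.nonneg w, Complex.abs.nonneg ((α * b + β) / (γ * b + δ))]
    · simp only [eval_sub, eval_mul, eval_C, eval_X]
      intro h0'
      have h0'' : (γ * b + δ) * w = α * b + β := sub_eq_zero.mp h0'
      rcases eq_or_ne (γ * b + δ) 0 with hg | hg
      · exact hrootZ b hb (by rw [← h0'', hg, zero_mul])
      · have hwb : (α * b + β) / (γ * b + δ) = w := by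
          rw [← h0'']; field_simp
        have hge : (1:ℝ) ≤ Complex.abs ((α * b + β) / (γ * b + δ)) :=
          not_lt.mp (fun hlt => h ⟨hg, hlt⟩)
        have heq : Complex.abs ((α * b + β) / (γ * b + δ)) = 1 :=
          le_antisymm (by rw [hwb]; exact hw) hge
        exact (hCset b hg heq).1 ((mem_roots hPne).mp hb)
  -- numerator and denominator polynomials
  set NP := Polynomial.C ((P.natDegree : ℂ)) * (Polynomial.C α - Polynomial.C γ * Polynomial.X) *
      (P.derivative.roots.map (mobFac α β γ δ)).prod with hNPdef
  set DP := (P.roots.map (mobFac α β γ δ)).prod with hDPdef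
  have hKpos : 0 < Complex.abs P.leadingCoeff := Complex.abs.pos hlcne
  have hK'pos : 0 < Complex.abs P.derivative.leadingCoeff := Complex.abs.pos hlc'ne
  have hK'eq : Complex.abs P.derivative.leadingCoeff =
      (P.natDegree : ℝ) * Complex.abs P.leadingCoeff := by
    rw [hlc', map_mul, Complex.abs_natCast]
  -- the boundary bound
  have hbound : ∀ w : ℂ, Complex.abs w = 1 →
      Complex.abs (NP.eval w) ≤ M.toReal * Complex.abs (DP.eval w) := by
    intro w hw
    have hNPw : Complex.abs (NP.eval w) = (P.natDegree : ℝ) * Complex.abs (α - γ * w) *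
        Complex.abs ((((P.derivative.roots.map (mobFac α β γ δ)).prod)).eval w) := by
      rw [hNPdef]
      simp only [eval_mul, eval_sub, eval_C, eval_X, map_mul, Complex.abs_natCast]
    rcases eq_or_ne (α - γ * w) 0 with he | he
    · rw [hNPw, he, map_zero]
      have := Complex.abs.nonneg ((((P.derivative.roots.map (mobFac α β γ δ)).prod)).eval w)
      have := Complex.abs.nonneg (DP.eval w)
      nlinarith
    · set z := (δ * w - β) / (α - γ * w) with hzdef
      have hz1 : γ * z + δ = (α * δ - β * γ) / (α - γ * w) := by
        rw [hzdef]; field_simp; ring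
      have hz1' : γ * z + δ ≠ 0 := by rw [hz1]; exact div_ne_zero hdet he
      have hz2 : (α * z + β) / (γ * z + δ) = w := by
        rw [div_eq_iff hz1', hz1, hzdef, mul_div_assoc', mul_div_assoc', div_add' _ _ _ he,
          div_left_inj' he]
        ring
      obtain ⟨hPz, hSz⟩ := hCset z hz1' (by rw [hz2, hw])
      have hSz' : Complex.abs (P.derivative.eval z) ≤ M.toReal * Complex.abs (P.eval z) := by
        rw [map_div₀, div_le_iff₀ (Complex.abs.pos hPz)] at hSz
        exact hSz
      have hD := abs_prod_mobFac_circle α β γ δ P hw he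
      have hC := abs_prod_mobFac_circle α β γ δ P.derivative hw he
      rw [hcardZ, ← hzdef] at hD
      rw [hcardC, ← hzdef] at hC
      rw [← mul_le_mul_iff_of_pos_right (mul_pos hKpos hK'pos), hNPw]
      have hee : Complex.abs (α - γ * w) * Complex.abs (α - γ * w) ^ (P.natDegree - 1) =
          Complex.abs (α - γ * w) ^ P.natDegree := by
        rw [← pow_succ', hn1]
      calc (P.natDegree : ℝ) * Complex.abs (α - γ * w) *
            Complex.abs ((((P.derivative.roots.map (mobFac α β γ δ)).prod)).eval w) *
            (Complex.abs P.leadingCoeff * Complex.abs P.derivative.leadingCoeff)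
          = (P.natDegree : ℝ) * Complex.abs (α - γ * w) ^ P.natDegree *
            Complex.abs (P.derivative.eval z) * Complex.abs P.leadingCoeff := by
            rw [← hee]
            linear_combination ((P.natDegree : ℝ) * Complex.abs (α - γ * w) *
              Complex.abs P.leadingCoeff) * hC
        _ ≤ (P.natDegree : ℝ) * Complex.abs (α - γ * w) ^ P.natDegree *
            (M.toReal * Complex.abs (P.eval z)) * Complex.abs P.leadingCoeff := by
            have h1 : (0:ℝ) ≤ (P.natDegree : ℝ) * Complex.abs (α - γ * w) ^ P.natDegree := by
              positivity
            have h2 := Complex.abs.nonneg P.leadingCoeff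
            exact mul_le_mul_of_nonneg_right (mul_le_mul_of_nonneg_left hSz' h1) h2
        _ = M.toReal * (Complex.abs (DP.eval w)) *
            (Complex.abs P.leadingCoeff * Complex.abs P.derivative.leadingCoeff) := by
            rw [hK'eq]
            linear_combination (-(M.toReal * (P.natDegree : ℝ) * Complex.abs P.leadingCoeff)) * hD
  -- maximum modulus principle
  have key0 : Complex.abs (NP.eval 0 / DP.eval 0) ≤ M.toReal := by
    have hdiff : DiffContOnCl ℂ (fun w : ℂ => NP.eval w / DP.eval w) (Metric.ball (0:ℂ) 1) := by
      apply DifferentiableOn.diffContOnCl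
      rw [closure_ball (0:ℂ) one_ne_zero]
      apply DifferentiableOn.div
      · exact (NP.differentiable).differentiableOn
      · exact (DP.differentiable).differentiableOn
      · intro w hw
        exact hDne w (by simpa [Complex.norm_eq_abs] using Metric.mem_closedBall.mp hw)
    have hfront : ∀ w ∈ frontier (Metric.ball (0:ℂ) 1),
        ‖NP.eval w / DP.eval w‖ ≤ M.toReal := by
      intro w hwf
      rw [frontier_ball (0:ℂ) one_ne_zero] at hwf
      have hw : Complex.abs w = 1 := by
        simpa [Complex.dist_eq, Complex.norm_eq_abs] using Metric.mem_sphere.mp hwf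
      rw [Complex.norm_eq_abs, map_div₀,
        div_le_iff₀ (Complex.abs.pos (hDne w hw.le))]
      exact hbound w hw
    have h0mem : (0:ℂ) ∈ closure (Metric.ball (0:ℂ) 1) := by
      rw [closure_ball (0:ℂ) one_ne_zero]
      exact Metric.mem_closedBall_self zero_le_one
    have := Complex.norm_le_of_forall_mem_frontier_norm_le Metric.isBounded_ball hdiff hfront h0mem
    rwa [Complex.norm_eq_abs] at this
  -- value at zero
  have hD0 := abs_prod_mobFac_zero α β γ δ P hα hrootZ
  have hC0 := abs_prod_mobFac_zero α β γ δ P.derivative hα hrootC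
  rw [haa, hcardZ] at hD0
  rw [haa, hcardC] at hC0
  have hNP0 : Complex.abs (NP.eval 0) = (P.natDegree : ℝ) * Complex.abs α *
      Complex.abs ((((P.derivative.roots.map (mobFac α β γ δ)).prod)).eval 0) := by
    rw [hNPdef]
    simp only [eval_mul, eval_sub, eval_C, eval_X, map_mul, Complex.abs_natCast, mul_zero,
      sub_zero]
  have hval : Complex.abs (NP.eval 0 / DP.eval 0) =
      Complex.abs (P.derivative.eval a / P.eval a) *
        Real.exp ((P.derivative.roots.map fun ρ =>
            logNeg (Complex.abs ((α * ρ + β) / (γ * ρ + δ)))).sum -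
          (P.roots.map fun ζ =>
            logNeg (Complex.abs ((α * ζ + β) / (γ * ζ + δ)))).sum) := by
    have hD0ne : DP.eval 0 ≠ 0 := hDne 0 (by simp)
    have hee0 : Complex.abs α ^ P.natDegree =
        Complex.abs α * Complex.abs α ^ (P.natDegree - 1) := by
      rw [← pow_succ', hn1]
    rw [map_div₀, map_div₀, Real.exp_sub, hNP0]
    have hEzpos : (0:ℝ) < Real.exp ((P.roots.map fun ζ =>
        logNeg (Complex.abs ((α * ζ + β) / (γ * ζ + δ)))).sum) := Real.exp_pos _
    have hEcpos : (0:ℝ) < Real.exp ((P.derivative.roots.map fun ρ =>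
        logNeg (Complex.abs ((α * ρ + β) / (γ * ρ + δ)))).sum) := Real.exp_pos _
    have hPapos : (0:ℝ) < Complex.abs (P.eval a) := Complex.abs.pos haZ
    have hDP0pos : (0:ℝ) < Complex.abs (DP.eval 0) := Complex.abs.pos hD0ne
    have hαpos : (0:ℝ) < Complex.abs α := Complex.abs.pos hα
    rw [hee0] at hD0
    rw [div_mul_div_comm, div_eq_div_iff hDP0pos.ne' (by positivity)]
    have hKK' : Complex.abs P.leadingCoeff * Complex.abs P.derivative.leadingCoeff ≠ 0 := by
      positivity
    apply mul_right_cancel₀ hKK'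
    linear_combination
      ((P.natDegree : ℝ) * Complex.abs α *
        Real.exp ((P.roots.map fun ζ =>
          logNeg (Complex.abs ((α * ζ + β) / (γ * ζ + δ)))).sum) *
        Complex.abs (P.eval a) * Complex.abs P.leadingCoeff) * hC0 +
      (-(Complex.abs (P.derivative.eval a) *
        Real.exp ((P.derivative.roots.map fun ρ =>
          logNeg (Complex.abs ((α * ρ + β) / (γ * ρ + δ)))).sum) *
        Complex.abs P.derivative.leadingCoeff)) * hD0 +
      (-(Complex.abs α * Complex.abs α ^ (P.natDegree - 1) *
        Real.exp ((P.roots.map fun ζ =>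
          logNeg (Complex.abs ((α * ζ + β) / (γ * ζ + δ)))).sum) *
        Complex.abs (P.eval a) * Complex.abs (P.derivative.eval a) *
        Real.exp ((P.derivative.roots.map fun ρ =>
          logNeg (Complex.abs ((α * ρ + β) / (γ * ρ + δ)))).sum))) * hK'eq
  -- conclusion
  have hfin : Complex.abs (P.derivative.eval a / P.eval a) *
      Real.exp ((P.derivative.roots.map fun ρ =>
          logNeg (Complex.abs ((α * ρ + β) / (γ * ρ + δ)))).sum -
        (P.roots.map fun ζ =>
          logNeg (Complex.abs ((α * ζ + β) / (γ * ζ + δ)))).sum) ≤ M.toReal := by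
    rw [← hval]; exact key0
  have hSapos : 0 < Complex.abs (P.derivative.eval a / P.eval a) :=
    Complex.abs.pos (div_ne_zero haC haZ)
  have hMpos : 0 < M.toReal := lt_of_lt_of_le (by positivity) hfin
  have hlogle := Real.log_le_log (by positivity) hfin
  rw [Real.log_mul hSapos.ne' (Real.exp_ne_zero _), Real.log_exp] at hlogle
  have hM0 : M ≠ 0 := by
    intro h
    rw [h] at hMpos
    simp at hMpos
  rw [ENNReal.log_pos_real hM0 hMtop, ← EReal.coe_sub]
  exact EReal.coe_le_coe_iff.mpr (by linarith)
end
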